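/- Let WN = (P,T,F,i,o) be a sound acyclic free-choice workflow net (AFW-net) and let (x,y) ∈ ∥. Then for every node a ∈ HasPath(x), we have y ∉ HasPath(a), and symmetrically for every node b ∈ HasPath(y), we have x ∉ HasPath(b). That is, no node reachable by a path from x has a path to y, and vice versa. -/

import Mathlib

/-- A Petri net: finite disjoint sets of places and transitions and a flow relation
`F ⊆ (P × T) ∪ (T × P)`. -/
structure PetriNet (α : Type) [DecidableEq α] where
  places : Finset α
  transitions : Finset α
  flow : Finset (α × α)
  disjoint_pt : Disjoint places transitions
  flow_mem : ∀ e ∈ flow,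
    (e.1 ∈ places ∧ e.2 ∈ transitions) ∨ (e.1 ∈ transitions ∧ e.2 ∈ places)

namespace PetriNet

variable {α : Type} [DecidableEq α]

/-- All nodes `P ∪ T` of the net. -/
def nodes (N : PetriNet α) : Finset α := N.places ∪ N.transitions

/-- The preset `•x` of a node. -/
def preset (N : PetriNet α) (x : α) : Finset α :=
  N.nodes.filter (fun p => (p, x) ∈ N.flow)

/-- The postset `x•` of a node. -/
def postset (N : PetriNet α) (x : α) : Finset α :=
  N.nodes.filter (fun s => (x, s) ∈ N.flow)

/-- A path: a nonempty sequence of nodes, each consecutive pair related by the flow. -/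
def IsPath (N : PetriNet α) (w : List α) : Prop :=
  w ≠ [] ∧ (∀ x ∈ w, x ∈ N.nodes) ∧ w.Chain' (fun a b => (a, b) ∈ N.flow)

/-- An acyclic path: a path whose nodes are pairwise distinct. -/
def IsAcyclicPath (N : PetriNet α) (w : List α) : Prop :=
  N.IsPath w ∧ w.Nodup

/-- There is an acyclic path from `x` to `y`. -/
def HasAcyclicPath (N : PetriNet α) (x y : α) : Prop :=
  ∃ w, N.IsAcyclicPath w ∧ w.head? = some x ∧ w.getLast? = some y

/-- `HasPath(x)`: the set of all nodes to which `x` has an acyclic path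
(including `x` itself, via the trivial path `(x)` when `x` is a node). -/
def HasPathSet (N : PetriNet α) (x : α) : Set α := {y | N.HasAcyclicPath x y}

/-- A net is acyclic iff no node has a nontrivial path to itself. -/
def Acyclic (N : PetriNet α) : Prop :=
  ∀ x, ¬ ∃ w, N.IsPath w ∧ 2 ≤ w.length ∧ w.head? = some x ∧ w.getLast? = some x

/-- A transition `t` is enabled in marking `M` iff all its input places carry a token. -/
def Enabled (N : PetriNet α) (M : α → ℕ) (t : α) : Prop :=
  t ∈ N.transitions ∧ ∀ p ∈ N.preset t, 1 ≤ M p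

/-- Firing `t` consumes one token from each input place and produces one on each output place. -/
def fire (N : PetriNet α) (M : α → ℕ) (t : α) : α → ℕ := fun p =>
  (M p - (if p ∈ N.preset t then 1 else 0)) + (if p ∈ N.postset t then 1 else 0)

/-- A step `M —t→ M'`. -/
def Step (N : PetriNet α) (M : α → ℕ) (t : α) (M' : α → ℕ) : Prop :=
  N.Enabled M t ∧ M' = N.fire M t

/-- Reachability via finite occurrence sequences. -/
def Reachable (N : PetriNet α) : (α → ℕ) → (α → ℕ) → Prop :=
  Relation.ReflTransGen (fun M M' => ∃ t, N.Step M t M')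

/-- Liveness with respect to an initial marking. -/
def Live (N : PetriNet α) (M₀ : α → ℕ) : Prop :=
  ∀ M, N.Reachable M₀ M → ∀ t ∈ N.transitions, ∃ M', N.Reachable M M' ∧ N.Enabled M' t

/-- Boundedness with respect to an initial marking. -/
def Bounded (N : PetriNet α) (M₀ : α → ℕ) : Prop :=
  ∃ n : ℕ, ∀ M, N.Reachable M₀ M → ∀ p ∈ N.places, M p ≤ n

/-- Free-choice: every place with more than one output transition is the unique
input of each of those transitions. -/
def FreeChoice (N : PetriNet α) : Prop :=
  ∀ p ∈ N.places, 1 < (N.postset p).card → ∀ t ∈ N.postset p, N.preset t = {p}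

/-- A node is active in `M` iff it is a place carrying a token or an enabled transition. -/
def Active (N : PetriNet α) (x : α) (M : α → ℕ) : Prop :=
  (x ∈ N.places ∧ 1 ≤ M x) ∨ (x ∈ N.transitions ∧ N.Enabled M x)

/-- One unfolding of the defining clauses of the concurrency relation. -/
def concStep (N : PetriNet α) (M₀ : α → ℕ) (R : Set (α × α)) : Set (α × α) :=
  {q | q.1 ≠ q.2 ∧
    (∃ M, N.Reachable M₀ M ∧ N.Active q.1 M ∧ N.Active q.2 M) ∧
    (q.1 ∈ N.transitions → q.2 ∈ N.places → ∀ z ∈ N.preset q.1, (z, q.2) ∈ R) ∧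
    (q.1 ∈ N.places → q.2 ∈ N.transitions → ∀ z ∈ N.preset q.2, (z, q.1) ∈ R) ∧
    (q.1 ∈ N.transitions → q.2 ∈ N.transitions →
      ∀ z ∈ N.preset q.1, ∀ z' ∈ N.preset q.2, (z, z') ∈ R)}

/-- The concurrency relation `∥`: the greatest relation consistent with its
defining clauses (Def. of concurrency). -/
def Concurrent (N : PetriNet α) (M₀ : α → ℕ) : Set (α × α) :=
  ⋃₀ {R | R ⊆ N.concStep M₀ R}

/-- The number of places on `w` carrying at least one token in `M`. -/
def tokensOn (N : PetriNet α) (M : α → ℕ) (w : List α) : ℕ :=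
  (w.toFinset.filter (fun p => p ∈ N.places ∧ 1 ≤ M p)).card

end PetriNet

/-- A workflow net: a Petri net with a source place `i` (`•i = ∅`), a sink place `o`
(`o• = ∅`), and every node on a path from `i` to `o`. -/
structure WorkflowNet (α : Type) [DecidableEq α] extends PetriNet α where
  source : α
  sink : α
  source_mem : source ∈ places
  sink_mem : sink ∈ places
  source_no_pre : toPetriNet.preset source = ∅
  sink_no_post : toPetriNet.postset sink = ∅
  all_on_path : ∀ x ∈ toPetriNet.nodes, ∃ w, toPetriNet.IsPath w ∧
    w.head? = some source ∧ w.getLast? = some sink ∧ x ∈ w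

namespace WorkflowNet

variable {α : Type} [DecidableEq α]

/-- The initial marking: one token on the source, none elsewhere. -/
def initialMarking (W : WorkflowNet α) : α → ℕ := fun p => if p = W.source then 1 else 0

/-- The terminal marking: one token on the sink, none elsewhere. -/
def terminalMarking (W : WorkflowNet α) : α → ℕ := fun p => if p = W.sink then 1 else 0

/-- Soundness of a workflow net. -/
def Sound (W : WorkflowNet α) : Prop :=
  (∀ M, W.toPetriNet.Reachable W.initialMarking M →
    W.toPetriNet.Reachable M W.terminalMarking ∧ (1 ≤ M W.sink → M = W.terminalMarking)) ∧
  (∀ t ∈ W.transitions, ∃ M M', W.toPetriNet.Reachable W.initialMarking M ∧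
    W.toPetriNet.Step M t M')

end WorkflowNet
namespace PetriNet

variable {α : Type} [DecidableEq α]

/-! ### Basic path lemmas -/

lemma isPath_nodup {N : PetriNet α} (hacyc : N.Acyclic) {w : List α}
    (hw : N.IsPath w) : w.Nodup := by
  by_contra hnd
  -- get a duplicate element with an infix x :: l₂ ++ [x]
  obtain ⟨x, hx2⟩ : ∃ x, 2 ≤ w.count x := by
    by_contra h
    push_neg at h
    exact hnd (List.nodup_iff_count_le_one.2 fun a => by
      have := h a; omega)
  have hxw : x ∈ w := by
    have : 0 < w.count x := by omega
    exact List.count_pos_iff.mp this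
  obtain ⟨s, t, hst⟩ := List.append_of_mem hxw
  have hcount : 2 ≤ (s ++ x :: t).count x := hst ▸ hx2
  rw [List.count_append, List.count_cons_self] at hcount
  have : x ∈ s ∨ x ∈ t := by
    rcases Nat.lt_or_ge 0 (s.count x) with h | h
    · exact Or.inl (List.count_pos_iff.mp h)
    · right; apply List.count_pos_iff.mp; omega
  -- build a cyclic segment
  obtain ⟨l₁, l₂, l₃, hw'⟩ : ∃ l₁ l₂ l₃, w = l₁ ++ (x :: (l₂ ++ [x])) ++ l₃ := by
    rcases this with h | h
    · obtain ⟨u, v, huv⟩ := List.append_of_mem h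
      exact ⟨u, v, t, by simp [hst, huv]⟩
    · obtain ⟨u, v, huv⟩ := List.append_of_mem h
      exact ⟨s, u, v, by simp [hst, huv]⟩
  have hinf : (x :: (l₂ ++ [x])) <:+: w := ⟨l₁, l₃, hw'.symm⟩
  refine hacyc x ⟨x :: (l₂ ++ [x]), ⟨by simp, ?_, hw.2.2.infix hinf⟩, by simp, ?_, ?_⟩
  · intro a ha
    exact hw.2.1 a (hinf.subset ha)
  · simp
  · rw [show x :: (l₂ ++ [x]) = (x :: l₂) ++ [x] by simp, List.getLast?_concat]

lemma no_cycle {N : PetriNet α} (hacyc : N.Acyclic) {w : List α} {x : α}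
    (hw : N.IsPath w) (hh : w.head? = some x) (hl : w.getLast? = some x)
    (hlen : 2 ≤ w.length) : False :=
  hacyc x ⟨w, hw, hlen, hh, hl⟩

lemma hasPath_of_isPath {N : PetriNet α} (hacyc : N.Acyclic) {w : List α} {x y : α}
    (hw : N.IsPath w) (hh : w.head? = some x) (hl : w.getLast? = some y) :
    N.HasAcyclicPath x y :=
  ⟨w, ⟨hw, isPath_nodup hacyc hw⟩, hh, hl⟩

lemma hasPath_refl {N : PetriNet α} {x : α} (hx : x ∈ N.nodes) :
    N.HasAcyclicPath x x :=
  ⟨[x], ⟨⟨by simp, by simpa, by simp [List.Chain']⟩, by simp⟩, by simp, by simp⟩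

/-- Prepend a node to a path via a flow edge. -/
lemma isPath_cons {N : PetriNet α} {w : List α} {z u : α}
    (hz : z ∈ N.nodes) (hw : N.IsPath w) (hh : w.head? = some u)
    (hf : (z, u) ∈ N.flow) :
    N.IsPath (z :: w) ∧ (z :: w).head? = some z ∧ (z :: w).getLast? = w.getLast? := by
  obtain ⟨a, w', rfl⟩ : ∃ a w', w = a :: w' := by
    cases w with
    | nil => simp at hh
    | cons a w' => exact ⟨a, w', rfl⟩
  have ha : a = u := by simpa using hh
  subst ha
  refine ⟨⟨by simp, ?_, ?_⟩, rfl, ?_⟩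
  · intro t ht
    rcases List.mem_cons.mp ht with rfl | ht
    · exact hz
    · exact hw.2.1 t ht
  · exact List.isChain_cons.2 ⟨fun y hy => by simp at hy; subst hy; exact hf, hw.2.2⟩
  · simp [List.getLast?_cons_cons]

/-- Append a node to a path via a flow edge. -/
lemma isPath_snoc {N : PetriNet α} {w : List α} {v b : α}
    (hb : b ∈ N.nodes) (hw : N.IsPath w) (hl : w.getLast? = some v)
    (hf : (v, b) ∈ N.flow) :
    N.IsPath (w ++ [b]) ∧ (w ++ [b]).head? = w.head? ∧ (w ++ [b]).getLast? = some b := by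
  refine ⟨⟨by simp, ?_, ?_⟩, ?_, List.getLast?_concat⟩
  · intro t ht
    rcases List.mem_append.mp ht with ht | ht
    · exact hw.2.1 t ht
    · simp at ht; subst ht; exact hb
  · refine List.isChain_append.2 ⟨hw.2.2, by simp, ?_⟩
    intro x hx y hy
    simp at hy; subst hy
    rw [hl] at hx; simp at hx; subst hx; exact hf
  · obtain ⟨a, w', rfl⟩ : ∃ a w', w = a :: w' := by
      cases w with
      | nil => simp at hl
      | cons a w' => exact ⟨a, w', rfl⟩
    rfl

end PetriNet
namespace PetriNet

variable {α : Type} [DecidableEq α]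

/-- Decompose a path from the front. -/
lemma path_cons_decomp {N : PetriNet α} {w : List α} {u v : α}
    (hw : N.IsPath w) (hh : w.head? = some u) (hl : w.getLast? = some v)
    (huv : u ≠ v) :
    ∃ w₁ c, w = u :: w₁ ∧ N.IsPath w₁ ∧ w₁.head? = some c ∧
      w₁.getLast? = some v ∧ (u, c) ∈ N.flow ∧ c ∈ N.nodes := by
  obtain ⟨a, w₁, rfl⟩ : ∃ a w₁, w = a :: w₁ := by
    cases w with
    | nil => simp at hh
    | cons a w₁ => exact ⟨a, w₁, rfl⟩
  have ha : a = u := by simpa using hh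
  subst ha
  obtain ⟨c, w₂, rfl⟩ : ∃ c w₂, w₁ = c :: w₂ := by
    cases w₁ with
    | nil => simp at hl; exact absurd hl huv
    | cons c w₂ => exact ⟨c, w₂, rfl⟩
  refine ⟨c :: w₂, c, rfl, ⟨by simp, ?_, hw.2.2.tail⟩, rfl, ?_, ?_, ?_⟩
  · intro t ht; exact hw.2.1 t (List.mem_cons_of_mem _ ht)
  · simpa [List.getLast?_cons_cons] using hl
  · exact (List.isChain_cons_cons.mp hw.2.2).1
  · exact hw.2.1 c (by simp)

/-- Decompose a path from the back. -/
lemma path_snoc_decomp {N : PetriNet α} {w : List α} {u v : α}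
    (hw : N.IsPath w) (hh : w.head? = some u) (hl : w.getLast? = some v)
    (huv : u ≠ v) :
    ∃ w₀ c, w = w₀ ++ [v] ∧ N.IsPath w₀ ∧ w₀.head? = some u ∧
      w₀.getLast? = some c ∧ (c, v) ∈ N.flow ∧ c ∈ N.nodes := by
  obtain ⟨w₀, rfl⟩ : ∃ w₀, w = w₀ ++ [v] := by
    have hne : w ≠ [] := hw.1
    refine ⟨w.dropLast, ?_⟩
    rw [List.getLast?_eq_getLast hne, Option.some_inj] at hl
    conv_lhs => rw [← List.dropLast_append_getLast hne, hl]
  have hw₀ne : w₀ ≠ [] := by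
    rintro rfl
    simp at hh
    exact huv hh.symm
  obtain ⟨hc1, hc2, hc3⟩ := List.isChain_append.mp hw.2.2
  have hlast : w₀.getLast? = some (w₀.getLast hw₀ne) := List.getLast?_eq_getLast _
  refine ⟨w₀, w₀.getLast hw₀ne, rfl, ⟨hw₀ne, ?_, hc1⟩, ?_, hlast, ?_, ?_⟩
  · intro t ht; exact hw.2.1 t (by simp [ht])
  · rwa [List.head?_append_of_ne_nil _ hw₀ne] at hh
  · exact hc3 _ hlast _ (by simp)
  · exact hw.2.1 _ (by simp [List.getLast_mem hw₀ne])

/-- In an acyclic net there is no path back along a flow edge. -/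
lemma no_path_back {N : PetriNet α} (hacyc : N.Acyclic) {a b : α}
    (hf : (a, b) ∈ N.flow) (hb : b ∈ N.nodes) :
    ¬ N.HasAcyclicPath b a := by
  rintro ⟨w, ⟨hw, -⟩, hh, hl⟩
  obtain ⟨hp, hh', hl'⟩ := isPath_snoc hb hw hl hf
  rw [hh] at hh'
  refine no_cycle hacyc hp hh'.symm.symm hl' ?_
  have : w ≠ [] := hw.1
  have : 1 ≤ w.length := List.length_pos_iff.2 this
  simp; omega

/-- Transitivity of path existence (in an acyclic net). -/
lemma hasPath_trans {N : PetriNet α} (hacyc : N.Acyclic) {x a y : α}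
    (h1 : N.HasAcyclicPath x a) (h2 : N.HasAcyclicPath a y) :
    N.HasAcyclicPath x y := by
  obtain ⟨w₁, ⟨hw₁, -⟩, hh₁, hl₁⟩ := h1
  obtain ⟨w₂, ⟨hw₂, -⟩, hh₂, hl₂⟩ := h2
  obtain ⟨c, w₂', rfl⟩ : ∃ c w₂', w₂ = c :: w₂' := by
    cases w₂ with
    | nil => simp at hh₂
    | cons c w₂' => exact ⟨c, w₂', rfl⟩
  have hc : c = a := by simpa using hh₂
  subst hc
  cases w₂' with
  | nil =>
    simp at hl₂; subst hl₂
    exact hasPath_of_isPath hacyc hw₁ hh₁ hl₁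
  | cons d w₃ =>
    refine hasPath_of_isPath hacyc (w := w₁ ++ (d :: w₃)) ⟨by simp [hw₁.1], ?_, ?_⟩ ?_ ?_
    · intro t ht
      rcases List.mem_append.mp ht with ht | ht
      · exact hw₁.2.1 t ht
      · exact hw₂.2.1 t (List.mem_cons_of_mem _ ht)
    · refine List.isChain_append.2 ⟨hw₁.2.2, hw₂.2.2.tail, ?_⟩
      intro p hp q hq
      rw [hl₁] at hp; simp at hp; subst hp
      simp at hq; subst hq
      exact (List.isChain_cons_cons.mp hw₂.2.2).1
    · rw [List.head?_append_of_ne_nil _ hw₁.1]; exact hh₁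
    · rw [List.getLast?_append]
      have : (d :: w₃).getLast? = some y := by
        simpa [List.getLast?_cons_cons] using hl₂
      rw [this]; rfl

end PetriNet
namespace PetriNet

variable {α : Type} [DecidableEq α]

lemma place_of_flow_trans {N : PetriNet α} {a t : α} (h : (a, t) ∈ N.flow)
    (ht : t ∈ N.transitions) : a ∈ N.places := by
  rcases N.flow_mem _ h with ⟨h1, h2⟩ | ⟨h1, h2⟩
  · exact h1
  · exact absurd ht (Finset.disjoint_left.mp N.disjoint_pt h2)

lemma place_of_trans_flow {N : PetriNet α} {t a : α} (h : (t, a) ∈ N.flow)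
    (ht : t ∈ N.transitions) : a ∈ N.places := by
  rcases N.flow_mem _ h with ⟨h1, h2⟩ | ⟨h1, h2⟩
  · exact absurd ht (Finset.disjoint_left.mp N.disjoint_pt h1)
  · exact h2

lemma trans_of_place_flow {N : PetriNet α} {p a : α} (h : (p, a) ∈ N.flow)
    (hp : p ∈ N.places) : a ∈ N.transitions := by
  rcases N.flow_mem _ h with ⟨h1, h2⟩ | ⟨h1, h2⟩
  · exact h2
  · exact absurd hp (Finset.disjoint_left.mp N.disjoint_pt.symm h1)

lemma preset_subset_places {N : PetriNet α} {t : α} (ht : t ∈ N.transitions) :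
    N.preset t ⊆ N.places := by
  intro a ha
  rw [preset, Finset.mem_filter] at ha
  exact place_of_flow_trans ha.2 ht

lemma postset_subset_places {N : PetriNet α} {t : α} (ht : t ∈ N.transitions) :
    N.postset t ⊆ N.places := by
  intro a ha
  rw [postset, Finset.mem_filter] at ha
  exact place_of_trans_flow ha.2 ht

/-! ### Descendant / ancestor counts -/

open scoped Classical in
/-- Number of descendants of a node. -/
noncomputable def descC (N : PetriNet α) (x : α) : ℕ :=
  (N.nodes.filter (fun y => N.HasAcyclicPath x y)).card

open scoped Classical in
/-- Number of ancestors of a node. -/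
noncomputable def ancC (N : PetriNet α) (x : α) : ℕ :=
  (N.nodes.filter (fun z => N.HasAcyclicPath z x)).card

lemma hasPath_of_flow {N : PetriNet α} (hacyc : N.Acyclic) {a b : α}
    (hf : (a, b) ∈ N.flow) (ha : a ∈ N.nodes) (hb : b ∈ N.nodes) :
    N.HasAcyclicPath a b := by
  have hab : a ≠ b := by
    rintro rfl
    exact no_cycle hacyc (x := a) (w := [a, a]) ⟨by simp, by simpa using ha, by simp [List.Chain', hf]⟩
      (by simp) (by simp) (by simp)
  exact ⟨[a, b], ⟨⟨by simp, by rintro t ht; simp at ht; rcases ht with rfl | rfl <;>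
    assumption, by simp [List.Chain', hf]⟩, by simp [hab]⟩, by simp, by simp⟩

lemma descC_lt {N : PetriNet α} (hacyc : N.Acyclic) {a b : α}
    (hf : (a, b) ∈ N.flow) (ha : a ∈ N.nodes) (hb : b ∈ N.nodes) :
    N.descC b < N.descC a := by
  classical
  apply Finset.card_lt_card
  constructor
  · intro y hy
    rw [Finset.mem_filter] at hy ⊢
    exact ⟨hy.1, hasPath_trans hacyc (hasPath_of_flow hacyc hf ha hb) hy.2⟩
  · intro hsub
    have haa : a ∈ N.nodes.filter (fun y => N.HasAcyclicPath a y) := by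
      rw [Finset.mem_filter]; exact ⟨ha, hasPath_refl ha⟩
    have := hsub haa
    rw [Finset.mem_filter] at this
    exact no_path_back hacyc hf hb this.2

lemma ancC_lt {N : PetriNet α} (hacyc : N.Acyclic) {a b : α}
    (hf : (a, b) ∈ N.flow) (ha : a ∈ N.nodes) (hb : b ∈ N.nodes) :
    N.ancC a < N.ancC b := by
  classical
  apply Finset.card_lt_card
  constructor
  · intro z hz
    rw [Finset.mem_filter] at hz ⊢
    exact ⟨hz.1, hasPath_trans hacyc hz.2 (hasPath_of_flow hacyc hf ha hb)⟩
  · intro hsub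
    have hbb : b ∈ N.nodes.filter (fun z => N.HasAcyclicPath z b) := by
      rw [Finset.mem_filter]; exact ⟨hb, hasPath_refl hb⟩
    have := hsub hbb
    rw [Finset.mem_filter] at this
    exact no_path_back hacyc hf hb this.2

end PetriNet

namespace WorkflowNet

variable {α : Type} [DecidableEq α]

/-- Every transition has a nonempty preset. -/
lemma preset_nonempty (W : WorkflowNet α) {t : α} (ht : t ∈ W.transitions) :
    ∃ z, z ∈ W.toPetriNet.preset t := by
  obtain ⟨w, hw, hh, hl, htw⟩ := W.all_on_path t (by
    rw [PetriNet.nodes, Finset.mem_union]; exact Or.inr ht)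
  obtain ⟨s, u, rfl⟩ := List.append_of_mem htw
  have hsne : s ≠ [] := by
    rintro rfl
    simp at hh
    exact Finset.disjoint_left.mp W.disjoint_pt W.source_mem (hh ▸ ht)
  obtain ⟨-, -, h3⟩ := List.isChain_append.mp hw.2.2
  have hlast : s.getLast? = some (s.getLast hsne) := List.getLast?_eq_getLast _
  have hf : (s.getLast hsne, t) ∈ W.flow := h3 _ hlast _ (by simp)
  refine ⟨s.getLast hsne, ?_⟩
  rw [PetriNet.preset, Finset.mem_filter]
  exact ⟨hw.2.1 _ (by simp [List.getLast_mem hsne]), hf⟩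

/-- Every transition has a nonempty postset. -/
lemma postset_nonempty (W : WorkflowNet α) {t : α} (ht : t ∈ W.transitions) :
    ∃ z, z ∈ W.toPetriNet.postset t := by
  obtain ⟨w, hw, hh, hl, htw⟩ := W.all_on_path t (by
    rw [PetriNet.nodes, Finset.mem_union]; exact Or.inr ht)
  obtain ⟨s, u, rfl⟩ := List.append_of_mem htw
  obtain ⟨d, u', rfl⟩ : ∃ d u', u = d :: u' := by
    cases u with
    | nil =>
      exfalso
      rw [List.getLast?_append] at hl
      simp at hl
      exact Finset.disjoint_left.mp W.disjoint_pt W.sink_mem (hl ▸ ht)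
    | cons d u' => exact ⟨d, u', rfl⟩
  obtain ⟨-, h2, -⟩ := List.isChain_append.mp hw.2.2
  have hf : (t, d) ∈ W.flow := (List.isChain_cons_cons.mp h2).1
  refine ⟨d, ?_⟩
  rw [PetriNet.postset, Finset.mem_filter]
  exact ⟨hw.2.1 d (by simp), hf⟩

end WorkflowNet
namespace PetriNet

variable {α : Type} [DecidableEq α]

lemma node_of_trans {N : PetriNet α} {t : α} (h : t ∈ N.transitions) : t ∈ N.nodes := by
  rw [nodes, Finset.mem_union]; exact Or.inr h

lemma node_of_place {N : PetriNet α} {p : α} (h : p ∈ N.places) : p ∈ N.nodes := by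
  rw [nodes, Finset.mem_union]; exact Or.inl h

lemma flow_of_preset {N : PetriNet α} {z t : α} (h : z ∈ N.preset t) :
    (z, t) ∈ N.flow ∧ z ∈ N.nodes := by
  rw [preset, Finset.mem_filter] at h; exact ⟨h.2, h.1⟩

lemma flow_of_postset {N : PetriNet α} {t s : α} (h : s ∈ N.postset t) :
    (t, s) ∈ N.flow ∧ s ∈ N.nodes := by
  rw [postset, Finset.mem_filter] at h; exact ⟨h.2, h.1⟩

lemma fire_pos_of_post {N : PetriNet α} {M : α → ℕ} {t s : α}
    (hs : s ∈ N.postset t) (hen : N.Enabled M t) : 1 ≤ N.fire M t s := by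
  rw [fire]
  by_cases h : s ∈ N.preset t
  · have := hen.2 s h
    simp [h, hs] <;> omega
  · simp [h, hs]

lemma fire_pos_of_not_pre {N : PetriNet α} {M : α → ℕ} {t p : α}
    (hp : p ∉ N.preset t) (h : 1 ≤ M p) : 1 ≤ N.fire M t p := by
  rw [fire]; simp [hp] <;> omega

lemma fire_ge_of_not_pre {N : PetriNet α} {M : α → ℕ} {t p : α}
    (hp : p ∉ N.preset t) : M p ≤ N.fire M t p := by
  rw [fire]; simp only [hp, if_false, ite_false]
  omega

lemma fire_two {N : PetriNet α} {M : α → ℕ} {t q : α}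
    (hq : q ∉ N.preset t) (hq' : q ∈ N.postset t) (h : 1 ≤ M q) :
    2 ≤ N.fire M t q := by
  rw [fire]; simp [hq, hq']; omega

lemma fire_pos_of_two {N : PetriNet α} {M : α → ℕ} {t q : α}
    (h : 2 ≤ M q) : 1 ≤ N.fire M t q := by
  rw [fire]
  by_cases h1 : q ∈ N.preset t <;> by_cases h2 : q ∈ N.postset t <;> simp [h1, h2] <;> omega

end PetriNet

namespace WorkflowNet

variable {α : Type} [DecidableEq α]

lemma terminal_le_one (W : WorkflowNet α) (p : α) : W.terminalMarking p ≤ 1 := by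
  rw [terminalMarking]; split <;> omega

lemma eq_sink_of_terminal_pos (W : WorkflowNet α) {p : α}
    (h : 1 ≤ W.terminalMarking p) : p = W.sink := by
  rw [terminalMarking] at h
  by_contra hne; simp [hne] at h

/-- Along a run to the terminal marking, two marked distinct places must
eventually be (first) consumed. -/
lemma exists_first_consume₂ (W : WorkflowNet α) {M : α → ℕ} {p q : α}
    (hrun : W.toPetriNet.Reachable M W.terminalMarking)
    (hp : 1 ≤ M p) (hq : 1 ≤ M q) (hpq : p ≠ q) :
    ∃ M₁ t, W.toPetriNet.Reachable M M₁ ∧ W.toPetriNet.Enabled M₁ t ∧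
      1 ≤ M₁ p ∧ 1 ≤ M₁ q ∧ (p ∈ W.toPetriNet.preset t ∨ q ∈ W.toPetriNet.preset t) := by
  induction hrun using Relation.ReflTransGen.head_induction_on with
  | refl =>
    exact absurd (W.eq_sink_of_terminal_pos hp ▸ W.eq_sink_of_terminal_pos hq) (by
      intro h; exact hpq (by rw [W.eq_sink_of_terminal_pos hp, W.eq_sink_of_terminal_pos hq]))
  | head h' hrest ih =>
    obtain ⟨t, hen, rfl⟩ := h'
    by_cases hc : p ∈ W.toPetriNet.preset t ∨ q ∈ W.toPetriNet.preset t
    · exact ⟨_, t, Relation.ReflTransGen.refl, hen, hp, hq, hc⟩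
    · push_neg at hc
      obtain ⟨M₁, t', h1, h2, h3, h4, h5⟩ :=
        ih (PetriNet.fire_pos_of_not_pre hc.1 hp) (PetriNet.fire_pos_of_not_pre hc.2 hq)
      exact ⟨M₁, t', Relation.ReflTransGen.head ⟨t, hen, rfl⟩ h1, h2, h3, h4, h5⟩

/-- Along a run to the terminal marking, a doubly-marked place must
eventually be (first) consumed. -/
lemma exists_first_consume₁ (W : WorkflowNet α) {M : α → ℕ} {q : α}
    (hrun : W.toPetriNet.Reachable M W.terminalMarking) (hq : 2 ≤ M q) :
    ∃ M₁ t, W.toPetriNet.Reachable M M₁ ∧ W.toPetriNet.Enabled M₁ t ∧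
      2 ≤ M₁ q ∧ q ∈ W.toPetriNet.preset t := by
  induction hrun using Relation.ReflTransGen.head_induction_on with
  | refl => exact absurd (W.terminal_le_one q) (by omega)
  | head h' hrest ih =>
    obtain ⟨t, hen, rfl⟩ := h'
    by_cases hc : q ∈ W.toPetriNet.preset t
    · exact ⟨_, t, Relation.ReflTransGen.refl, hen, hq, hc⟩
    · obtain ⟨M₁, t', h1, h2, h3, h4⟩ :=
        ih (le_trans hq (PetriNet.fire_ge_of_not_pre hc))
      exact ⟨M₁, t', Relation.ReflTransGen.head ⟨t, hen, rfl⟩ h1, h2, h3, h4⟩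

end WorkflowNet
namespace WorkflowNet

variable {α : Type} [DecidableEq α]

/-- Main semantic lemma: in a sound acyclic free-choice workflow net, no reachable
marking marks two distinct places connected by a path, nor puts two tokens on a place. -/
lemma no_bad (W : WorkflowNet α) (hfc : W.toPetriNet.FreeChoice)
    (hacyc : W.toPetriNet.Acyclic) (hsound : W.Sound) :
    ∀ n : ℕ, ∀ M : α → ℕ, W.toPetriNet.Reachable W.initialMarking M →
      (∀ p q : α, p ∈ W.places → q ∈ W.places → p ≠ q → 1 ≤ M p → 1 ≤ M q →
        W.toPetriNet.HasAcyclicPath p q →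
        W.toPetriNet.descC p + W.toPetriNet.descC q ≤ n → False) ∧
      (∀ q : α, 2 ≤ M q → 2 * W.toPetriNet.descC q + 1 ≤ n → False) := by
  intro n
  induction n using Nat.strong_induction_on with
  | _ n ih =>
  intro M hM
  constructor
  · -- Part A : ordered marked pair
    intro p q hpP hqP hpq hp hq hpath hmeas
    have hrun : W.toPetriNet.Reachable M W.terminalMarking := (hsound.1 M hM).1
    -- q is not the sink
    have hqsink : q ≠ W.sink := by
      rintro rfl
      have := (hsound.1 M hM).2 hq
      rw [this, terminalMarking] at hp
      simp [hpq] at hp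
    obtain ⟨M₁, t, hMM₁, hen, hp₁, hq₁, hor⟩ := W.exists_first_consume₂ hrun hp hq hpq
    have htT : t ∈ W.transitions := hen.1
    have htN : t ∈ W.toPetriNet.nodes := PetriNet.node_of_trans htT
    have hM₁ : W.toPetriNet.Reachable W.initialMarking M₁ := hM.trans hMM₁
    -- decompose the path
    obtain ⟨w, ⟨hw, -⟩, hh, hl⟩ := hpath
    obtain ⟨w₁, t1, rfl, hw₁, hh₁, hl₁, hpt1, ht1N⟩ :=
      PetriNet.path_cons_decomp hw hh hl hpq
    have ht1T : t1 ∈ W.transitions := PetriNet.trans_of_place_flow hpt1 hpP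
    have ht1post : t1 ∈ W.toPetriNet.postset p := by
      rw [PetriNet.postset, Finset.mem_filter]; exact ⟨ht1N, hpt1⟩
    by_cases hqt : q ∈ W.toPetriNet.preset t
    · -- the step consumes q
      have hqtf : (q, t) ∈ W.flow := (PetriNet.flow_of_preset hqt).1
      by_cases hpt : p ∈ W.toPetriNet.preset t
      · -- t consumes both p and q : impossible by free-choice + acyclicity
        have hptf : (p, t) ∈ W.flow := (PetriNet.flow_of_preset hpt).1
        have htpost2 : t ∈ W.toPetriNet.postset p := by
          rw [PetriNet.postset, Finset.mem_filter]; exact ⟨htN, hptf⟩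
        by_cases htt1 : t = t1
        · -- cycle through t
          subst htt1
          obtain ⟨hp', hh', hl'⟩ := PetriNet.isPath_snoc htN hw₁ hl₁ hqtf
          rw [hh₁] at hh'
          refine PetriNet.no_cycle hacyc hp' hh' hl' ?_
          have : w₁ ≠ [] := hw₁.1
          have : 1 ≤ w₁.length := List.length_pos_iff.2 this
          simp; omega
        · have hcard : 1 < (W.toPetriNet.postset p).card :=
            Finset.one_lt_card.2 ⟨t, htpost2, t1, ht1post, htt1⟩
          have := hfc p hpP hcard t htpost2
          have : q = p := by
            have := this ▸ hqt
            simpa using this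
          exact hpq this.symm
      · -- fire t : token moves from q to some s, pair (p, s)
        obtain ⟨s, hs⟩ := W.postset_nonempty htT
        have hts : (t, s) ∈ W.flow := (PetriNet.flow_of_postset hs).1
        have hsN : s ∈ W.toPetriNet.nodes := (PetriNet.flow_of_postset hs).2
        have hsP : s ∈ W.places := PetriNet.postset_subset_places htT hs
        set M₂ := W.toPetriNet.fire M₁ t with hM₂def
        have hM₂ : W.toPetriNet.Reachable W.initialMarking M₂ :=
          hM₁.tail ⟨t, hen, rfl⟩
        have hM₂p : 1 ≤ M₂ p := PetriNet.fire_pos_of_not_pre hpt hp₁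
        have hM₂s : 1 ≤ M₂ s := PetriNet.fire_pos_of_post hs hen
        -- p ≠ s, else cycle
        have hqN : q ∈ W.toPetriNet.nodes := PetriNet.node_of_place hqP
        have hpath_ps : W.toPetriNet.HasAcyclicPath p s :=
          PetriNet.hasPath_trans hacyc
            (PetriNet.hasPath_trans hacyc
              (PetriNet.hasPath_of_isPath hacyc hw hh hl)
              (PetriNet.hasPath_of_flow hacyc hqtf hqN htN))
            (PetriNet.hasPath_of_flow hacyc hts htN hsN)
        have hps : p ≠ s := by
          rintro rfl
          obtain ⟨hp', hh', hl'⟩ := PetriNet.isPath_snoc htN hw hl hqtf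
          rw [hh] at hh'
          obtain ⟨hp'', hh'', hl''⟩ :=
            PetriNet.isPath_snoc (PetriNet.node_of_place hpP) hp' hl' hts
          rw [hh'] at hh''
          refine PetriNet.no_cycle hacyc hp'' hh'' hl'' ?_
          simp only [List.length_append, List.length_cons]
          omega
        have hmeas' : W.toPetriNet.descC p + W.toPetriNet.descC s < n := by
          have h1 : W.toPetriNet.descC s < W.toPetriNet.descC t :=
            PetriNet.descC_lt hacyc hts htN hsN
          have h2 : W.toPetriNet.descC t < W.toPetriNet.descC q :=
            PetriNet.descC_lt hacyc hqtf hqN htN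
          omega
        exact (ih _ hmeas' M₂ hM₂).1 p s hpP hsP hps hM₂p hM₂s hpath_ps le_rfl
    · -- the step consumes p (and not q)
      have hpt : p ∈ W.toPetriNet.preset t := hor.resolve_right hqt
      have hptf : (p, t) ∈ W.flow := (PetriNet.flow_of_preset hpt).1
      have htpost : t ∈ W.toPetriNet.postset p := by
        rw [PetriNet.postset, Finset.mem_filter]; exact ⟨htN, hptf⟩
      -- t1 is enabled at M₁ , and q ∉ preset t1
      have ht1en : W.toPetriNet.Enabled M₁ t1 ∧ q ∉ W.toPetriNet.preset t1 := by
        by_cases htt1 : t = t1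
        · exact ⟨htt1 ▸ hen, htt1 ▸ hqt⟩
        · have hcard : 1 < (W.toPetriNet.postset p).card :=
            Finset.one_lt_card.2 ⟨t, htpost, t1, ht1post, htt1⟩
          have hpre : W.toPetriNet.preset t1 = {p} := hfc p hpP hcard t1 ht1post
          constructor
          · refine ⟨ht1T, ?_⟩
            intro r hr
            rw [hpre] at hr
            simp at hr; subst hr; exact hp₁
          · rw [hpre]; simp; exact fun h => hpq h.symm
      set M₂ := W.toPetriNet.fire M₁ t1 with hM₂def
      have hM₂ : W.toPetriNet.Reachable W.initialMarking M₂ :=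
        hM₁.tail ⟨t1, ht1en.1, rfl⟩
      -- decompose w₁ further : w₁ = t1 :: (r1 :: ...)
      have ht1q : t1 ≠ q := by
        rintro rfl
        exact Finset.disjoint_left.mp W.disjoint_pt hqP ht1T
      obtain ⟨w₂, r1, rfl, hw₂, hh₂, hl₂, ht1r1, hr1N⟩ :=
        PetriNet.path_cons_decomp hw₁ hh₁ hl₁ ht1q
      have hr1P : r1 ∈ W.places := PetriNet.place_of_trans_flow ht1r1 ht1T
      have hr1post : r1 ∈ W.toPetriNet.postset t1 := by
        rw [PetriNet.postset, Finset.mem_filter]; exact ⟨hr1N, ht1r1⟩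
      have hM₂q : 1 ≤ M₂ q := PetriNet.fire_pos_of_not_pre ht1en.2 hq₁
      have hM₂r1 : 1 ≤ M₂ r1 := PetriNet.fire_pos_of_post hr1post ht1en.1
      have hdrop : W.toPetriNet.descC r1 + 2 ≤ W.toPetriNet.descC p := by
        have h1 : W.toPetriNet.descC r1 < W.toPetriNet.descC t1 :=
          PetriNet.descC_lt hacyc ht1r1 ht1N hr1N
        have h2 : W.toPetriNet.descC t1 < W.toPetriNet.descC p :=
          PetriNet.descC_lt hacyc hpt1 (PetriNet.node_of_place hpP) ht1N
        omega
      by_cases hr1q : r1 = q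
      · -- double token on q
        subst hr1q
        have h2q : 2 ≤ M₂ r1 := PetriNet.fire_two ht1en.2 hr1post hq₁
        have hmeas' : 2 * W.toPetriNet.descC r1 + 1 < n := by omega
        exact (ih _ hmeas' M₂ hM₂).2 r1 h2q le_rfl
      · -- pair (r1, q) with shorter path
        have hpath' : W.toPetriNet.HasAcyclicPath r1 q :=
          PetriNet.hasPath_of_isPath hacyc hw₂ hh₂ hl₂
        have hmeas' : W.toPetriNet.descC r1 + W.toPetriNet.descC q < n := by omega
        exact (ih _ hmeas' M₂ hM₂).1 r1 q hr1P hqP hr1q hM₂r1 hM₂q hpath' le_rfl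
  · -- Part B : double token
    intro q h2 hmeas
    have hrun : W.toPetriNet.Reachable M W.terminalMarking := (hsound.1 M hM).1
    obtain ⟨M₁, t, hMM₁, hen, h2q, hqpre⟩ := W.exists_first_consume₁ hrun h2
    have htT : t ∈ W.transitions := hen.1
    have htN : t ∈ W.toPetriNet.nodes := PetriNet.node_of_trans htT
    have hqtf : (q, t) ∈ W.flow := (PetriNet.flow_of_preset hqpre).1
    have hqN : q ∈ W.toPetriNet.nodes := (PetriNet.flow_of_preset hqpre).2
    have hqP : q ∈ W.places := PetriNet.place_of_flow_trans hqtf htT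
    obtain ⟨s, hs⟩ := W.postset_nonempty htT
    have hts : (t, s) ∈ W.flow := (PetriNet.flow_of_postset hs).1
    have hsN : s ∈ W.toPetriNet.nodes := (PetriNet.flow_of_postset hs).2
    have hsP : s ∈ W.places := PetriNet.postset_subset_places htT hs
    have hsq : q ≠ s := by
      rintro rfl
      exact PetriNet.no_cycle hacyc (x := q) (w := [q, t, q])
        ⟨by simp, by
          rintro z hz
          simp at hz
          rcases hz with rfl | h
          · exact hqN
          · rcases h with rfl | rfl
            · exact htN
            · exact hqN, by simp [List.Chain', hqtf, hts]⟩
        (by simp) (by simp) (by simp)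
    set M₂ := W.toPetriNet.fire M₁ t with hM₂def
    have hM₂ : W.toPetriNet.Reachable W.initialMarking M₂ :=
      (hM.trans hMM₁).tail ⟨t, hen, rfl⟩
    have hM₂q : 1 ≤ M₂ q := PetriNet.fire_pos_of_two h2q
    have hM₂s : 1 ≤ M₂ s := PetriNet.fire_pos_of_post hs hen
    have hpath : W.toPetriNet.HasAcyclicPath q s :=
      PetriNet.hasPath_trans hacyc
        (PetriNet.hasPath_of_flow hacyc hqtf hqN htN)
        (PetriNet.hasPath_of_flow hacyc hts htN hsN)
    have hmeas' : W.toPetriNet.descC q + W.toPetriNet.descC s < n := by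
      have h1 : W.toPetriNet.descC s < W.toPetriNet.descC t :=
        PetriNet.descC_lt hacyc hts htN hsN
      have h2' : W.toPetriNet.descC t < W.toPetriNet.descC q :=
        PetriNet.descC_lt hacyc hqtf hqN htN
      omega
    exact (ih _ hmeas' M₂ hM₂).1 q s hqP hsP hsq hM₂q hM₂s hpath le_rfl

end WorkflowNet
namespace WorkflowNet

variable {α : Type} [DecidableEq α]

/-- Structural core lemma: any relation consistent with the concurrency clauses
contains no pair connected by a path. -/
lemma core (W : WorkflowNet α) (hfc : W.toPetriNet.FreeChoice)
    (hacyc : W.toPetriNet.Acyclic) (hsound : W.Sound) {R : Set (α × α)}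
    (hR : R ⊆ W.toPetriNet.concStep W.initialMarking R) :
    ∀ n : ℕ, ∀ u v : α, (u, v) ∈ R →
      W.toPetriNet.ancC u + W.toPetriNet.ancC v ≤ n →
      ¬ W.toPetriNet.HasAcyclicPath u v ∧ ¬ W.toPetriNet.HasAcyclicPath v u := by
  intro n
  induction n using Nat.strong_induction_on with
  | _ n ih =>
  intro u v huv hmeas
  obtain ⟨hneq, ⟨M, hM, hau, hav⟩, cTP, cPT, cTT⟩ := hR huv
  replace hneq : u ≠ v := hneq
  replace hau : W.toPetriNet.Active u M := hau
  replace hav : W.toPetriNet.Active v M := hav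
  replace cTP : u ∈ W.transitions → v ∈ W.places →
    ∀ z ∈ W.toPetriNet.preset u, (z, v) ∈ R := cTP
  replace cPT : u ∈ W.places → v ∈ W.transitions →
    ∀ z ∈ W.toPetriNet.preset v, (z, u) ∈ R := cPT
  replace cTT : u ∈ W.transitions → v ∈ W.transitions →
    ∀ z ∈ W.toPetriNet.preset u, ∀ z' ∈ W.toPetriNet.preset v, (z, z') ∈ R := cTT
  constructor
  · -- no path u → v
    rintro ⟨w, ⟨hw, -⟩, hh, hl⟩
    rcases hau with ⟨huP, hMu⟩ | ⟨huT, -⟩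
    · rcases hav with ⟨hvP, hMv⟩ | ⟨hvT, -⟩
      · -- both places : semantic lemma
        exact (W.no_bad hfc hacyc hsound _ M hM).1 u v huP hvP hneq hMu hMv
          ⟨w, ⟨hw, PetriNet.isPath_nodup hacyc hw⟩, hh, hl⟩ le_rfl
      · -- u place, v transition
        obtain ⟨w₀, c, rfl, hw₀, hh₀, hl₀, hcv, hcN⟩ :=
          PetriNet.path_snoc_decomp hw hh hl hneq
        have hcpre : c ∈ W.toPetriNet.preset v := by
          rw [PetriNet.preset, Finset.mem_filter]; exact ⟨hcN, hcv⟩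
        have hcu : (c, u) ∈ R := cPT huP hvT c hcpre
        have hcu' : c ≠ u := (hR hcu).1
        have hlt : W.toPetriNet.ancC c + W.toPetriNet.ancC u < n := by
          have := PetriNet.ancC_lt hacyc hcv hcN (PetriNet.node_of_trans hvT)
          omega
        exact (ih _ hlt c u hcu le_rfl).2
          (PetriNet.hasPath_of_isPath hacyc hw₀ hh₀ hl₀)
    · rcases hav with ⟨hvP, hMv⟩ | ⟨hvT, -⟩
      · -- u transition, v place
        obtain ⟨z, hz⟩ := W.preset_nonempty huT
        have hzv : (z, v) ∈ R := cTP huT hvP z hz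
        obtain ⟨hzu, hzN⟩ := PetriNet.flow_of_preset hz
        obtain ⟨hp', hh', hl'⟩ := PetriNet.isPath_cons hzN hw hh hzu
        rw [hl] at hl'
        by_cases hzv' : z = v
        · subst hzv'
          refine PetriNet.no_cycle hacyc hp' hh' hl' ?_
          have : 1 ≤ w.length := List.length_pos_iff.2 hw.1
          simp; omega
        · have hlt : W.toPetriNet.ancC z + W.toPetriNet.ancC v < n := by
            have := PetriNet.ancC_lt hacyc hzu hzN (PetriNet.node_of_trans huT)
            omega
          exact (ih _ hlt z v hzv le_rfl).1
            (PetriNet.hasPath_of_isPath hacyc hp' hh' hl')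
      · -- u transition, v transition
        obtain ⟨w₀, c, rfl, hw₀, hh₀, hl₀, hcv, hcN⟩ :=
          PetriNet.path_snoc_decomp hw hh hl hneq
        have hcpre : c ∈ W.toPetriNet.preset v := by
          rw [PetriNet.preset, Finset.mem_filter]; exact ⟨hcN, hcv⟩
        obtain ⟨z, hz⟩ := W.preset_nonempty huT
        have hzc : (z, c) ∈ R := cTT huT hvT z hz c hcpre
        obtain ⟨hzu, hzN⟩ := PetriNet.flow_of_preset hz
        obtain ⟨hp', hh', hl'⟩ := PetriNet.isPath_cons hzN hw₀ hh₀ hzu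
        rw [hl₀] at hl'
        by_cases hzc' : z = c
        · subst hzc'
          refine PetriNet.no_cycle hacyc hp' hh' hl' ?_
          have : 1 ≤ w₀.length := List.length_pos_iff.2 hw₀.1
          simp; omega
        · have hlt : W.toPetriNet.ancC z + W.toPetriNet.ancC c < n := by
            have h1 := PetriNet.ancC_lt hacyc hzu hzN (PetriNet.node_of_trans huT)
            have h2 := PetriNet.ancC_lt hacyc hcv hcN (PetriNet.node_of_trans hvT)
            omega
          exact (ih _ hlt z c hzc le_rfl).1
            (PetriNet.hasPath_of_isPath hacyc hp' hh' hl')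
  · -- no path v → u
    rintro ⟨w, ⟨hw, -⟩, hh, hl⟩
    have hneq' : v ≠ u := fun h => hneq h.symm
    rcases hau with ⟨huP, hMu⟩ | ⟨huT, -⟩
    · rcases hav with ⟨hvP, hMv⟩ | ⟨hvT, -⟩
      · exact (W.no_bad hfc hacyc hsound _ M hM).1 v u hvP huP hneq' hMv hMu
          ⟨w, ⟨hw, PetriNet.isPath_nodup hacyc hw⟩, hh, hl⟩ le_rfl
      · -- u place, v transition : use cPT with any z ∈ •v
        obtain ⟨z, hz⟩ := W.preset_nonempty hvT
        have hzu : (z, u) ∈ R := cPT huP hvT z hz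
        obtain ⟨hzv, hzN⟩ := PetriNet.flow_of_preset hz
        obtain ⟨hp', hh', hl'⟩ := PetriNet.isPath_cons hzN hw hh hzv
        rw [hl] at hl'
        by_cases hzu' : z = u
        · subst hzu'
          refine PetriNet.no_cycle hacyc hp' hh' hl' ?_
          have : 1 ≤ w.length := List.length_pos_iff.2 hw.1
          simp; omega
        · have hlt : W.toPetriNet.ancC z + W.toPetriNet.ancC u < n := by
            have := PetriNet.ancC_lt hacyc hzv hzN (PetriNet.node_of_trans hvT)
            omega
          exact (ih _ hlt z u hzu le_rfl).1
            (PetriNet.hasPath_of_isPath hacyc hp' hh' hl')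
    · rcases hav with ⟨hvP, hMv⟩ | ⟨hvT, -⟩
      · -- u transition, v place : use cTP with penultimate c ∈ •u
        obtain ⟨w₀, c, rfl, hw₀, hh₀, hl₀, hcu, hcN⟩ :=
          PetriNet.path_snoc_decomp hw hh hl hneq'
        have hcpre : c ∈ W.toPetriNet.preset u := by
          rw [PetriNet.preset, Finset.mem_filter]; exact ⟨hcN, hcu⟩
        have hcv : (c, v) ∈ R := cTP huT hvP c hcpre
        have hcv' : c ≠ v := (hR hcv).1
        have hlt : W.toPetriNet.ancC c + W.toPetriNet.ancC v < n := by
          have := PetriNet.ancC_lt hacyc hcu hcN (PetriNet.node_of_trans huT)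
          omega
        exact (ih _ hlt c v hcv le_rfl).2
          (PetriNet.hasPath_of_isPath hacyc hw₀ hh₀ hl₀)
      · -- u transition, v transition
        obtain ⟨w₀, c, rfl, hw₀, hh₀, hl₀, hcu, hcN⟩ :=
          PetriNet.path_snoc_decomp hw hh hl hneq'
        have hcpre : c ∈ W.toPetriNet.preset u := by
          rw [PetriNet.preset, Finset.mem_filter]; exact ⟨hcN, hcu⟩
        obtain ⟨z', hz'⟩ := W.preset_nonempty hvT
        have hcz : (c, z') ∈ R := cTT huT hvT c hcpre z' hz'
        obtain ⟨hz'v, hz'N⟩ := PetriNet.flow_of_preset hz'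
        obtain ⟨hp', hh', hl'⟩ := PetriNet.isPath_cons hz'N hw₀ hh₀ hz'v
        rw [hl₀] at hl'
        by_cases hzc' : z' = c
        · subst hzc'
          refine PetriNet.no_cycle hacyc hp' hh' hl' ?_
          have : 1 ≤ w₀.length := List.length_pos_iff.2 hw₀.1
          simp; omega
        · have hlt : W.toPetriNet.ancC c + W.toPetriNet.ancC z' < n := by
            have h1 := PetriNet.ancC_lt hacyc hcu hcN (PetriNet.node_of_trans huT)
            have h2 := PetriNet.ancC_lt hacyc hz'v hz'N (PetriNet.node_of_trans hvT)
            omega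
          exact (ih _ hlt c z' hcz le_rfl).2
            (PetriNet.hasPath_of_isPath hacyc hp' hh' hl')

end WorkflowNet
/-- In a sound acyclic free-choice workflow net, if `(x,y)` are concurrent then no node in
`HasPath(x)` has a path to `y`, and no node in `HasPath(y)` has a path to `x`. -/
theorem haspath_sets_no_cross_path {α : Type} [DecidableEq α] (W : WorkflowNet α)
    (hfc : W.toPetriNet.FreeChoice) (hacyc : W.toPetriNet.Acyclic) (hsound : W.Sound)
    (x y : α) (hxy : (x, y) ∈ W.toPetriNet.Concurrent W.initialMarking) :
    (∀ a ∈ W.toPetriNet.HasPathSet x, y ∉ W.toPetriNet.HasPathSet a) ∧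
    (∀ b ∈ W.toPetriNet.HasPathSet y, x ∉ W.toPetriNet.HasPathSet b) := by
  obtain ⟨R, hR, hxyR⟩ := Set.mem_sUnion.mp hxy
  have hcore := W.core hfc hacyc hsound hR
    (W.toPetriNet.ancC x + W.toPetriNet.ancC y) x y hxyR le_rfl
  constructor
  · intro a ha hy
    exact hcore.1 (PetriNet.hasPath_trans hacyc ha hy)
  · intro b hb hx
    exact hcore.2 (PetriNet.hasPath_trans hacyc hb hx)
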